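/- Let N ≥ 2 be an integer. There exists a constant C > 0, depending only on N, such that for every function c : {0,…,N−1} → [0,∞) and every vector α = (α_0,…,α_{N−1}) ∈ ℂ^N with ‖α‖ = 1 and ∑_{m=0}^{N−1} α_m = 0, one has ∑_{m=0}^{N−1} c(m) |α_m|² ≥ C · max_{m₀∈{0,…,N−1}} min_{m ≠ m₀} c(m). -/
import Mathlib


/-- Let `N ≥ 2`. There is a constant `C > 0` depending only on `N` such that for
every `c : {0,…,N−1} → [0,∞)` and every unit vector `α ∈ ℂ^N` (Euclidean norm) with
`∑ α m = 0`, one has `∑ m, c m |α m|² ≥ C · max_{m₀} min_{m ≠ m₀} c m`. -/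
theorem stmt_3 (N : ℕ) (hN : 2 ≤ N) :
    ∃ C : ℝ, 0 < C ∧
      ∀ c : Fin N → ℝ, (∀ m, 0 ≤ c m) →
        ∀ α : EuclideanSpace ℂ (Fin N), ‖α‖ = 1 → (∑ m, α m = 0) →
          C * ((Finset.univ : Finset (Fin N)).sup'
                ⟨⟨0, by omega⟩, Finset.mem_univ _⟩
                (fun m₀ => (Finset.univ.erase m₀).inf'
                  (Finset.card_pos.mp (by
                    rw [Finset.card_erase_of_mem (Finset.mem_univ _), Finset.card_univ,
                      Fintype.card_fin]
                    omega)) c))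
            ≤ ∑ m, c m * ‖α m‖ ^ 2 := by
  have hNpos : (0:ℝ) < N := by positivity
  refine ⟨(N:ℝ)⁻¹, by positivity, ?_⟩
  intro c hc α hα hsum
  obtain ⟨m₀, -, hm₀⟩ := Finset.exists_mem_eq_sup' (α := ℝ)
    ⟨(⟨0, by omega⟩ : Fin N), Finset.mem_univ _⟩
    (fun m₀ => (Finset.univ.erase m₀).inf'
      (Finset.card_pos.mp (by
        rw [Finset.card_erase_of_mem (Finset.mem_univ _), Finset.card_univ, Fintype.card_fin]
        omega)) c)
  rw [hm₀]
  set S := Finset.univ.erase m₀ with hS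
  have hSne : S.Nonempty := Finset.card_pos.mp (by
    rw [hS, Finset.card_erase_of_mem (Finset.mem_univ _), Finset.card_univ, Fintype.card_fin]
    omega)
  set t := S.inf' hSne c with ht
  have htle : ∀ m ∈ S, t ≤ c m := fun m hm => Finset.inf'_le c hm
  have ht0 : 0 ≤ t := by
    obtain ⟨m, hm, hmeq⟩ := Finset.exists_mem_eq_inf' hSne c
    rw [ht, hmeq]; exact hc m
  -- norm squared decomposition
  have hnorm : ∑ m, ‖α m‖ ^ 2 = 1 := by
    have h := EuclideanSpace.norm_eq α
    rw [hα] at h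
    exact Real.sqrt_eq_one.mp h.symm
  have hSc : (S.card : ℝ) = (N:ℝ) - 1 := by
    rw [hS, Finset.card_erase_of_mem (Finset.mem_univ _), Finset.card_univ, Fintype.card_fin]
    push_cast [Nat.cast_sub (by omega : 1 ≤ N)]
    ring_nf
  -- α m₀ = - sum over S
  have hα0 : α m₀ = - ∑ m ∈ S, α m := by
    have : α m₀ + ∑ m ∈ S, α m = 0 := by
      rw [hS, Finset.add_sum_erase _ _ (Finset.mem_univ m₀)]
      exact hsum
    linear_combination this
  have hCS : ‖α m₀‖ ^ 2 ≤ ((N:ℝ) - 1) * ∑ m ∈ S, ‖α m‖ ^ 2 := by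
    have h1 : ‖α m₀‖ ≤ ∑ m ∈ S, ‖α m‖ := by
      rw [hα0, norm_neg]
      exact norm_sum_le _ _
    have h2 : (∑ m ∈ S, ‖α m‖) ^ 2 ≤ (S.card : ℝ) * ∑ m ∈ S, ‖α m‖ ^ 2 :=
      sq_sum_le_card_mul_sum_sq
    calc ‖α m₀‖ ^ 2 ≤ (∑ m ∈ S, ‖α m‖) ^ 2 := by
          apply pow_le_pow_left₀ (norm_nonneg _) h1
      _ ≤ (S.card : ℝ) * ∑ m ∈ S, ‖α m‖ ^ 2 := h2
      _ = ((N:ℝ) - 1) * ∑ m ∈ S, ‖α m‖ ^ 2 := by rw [hSc]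
  have hsplit : ∑ m, ‖α m‖ ^ 2 = ‖α m₀‖ ^ 2 + ∑ m ∈ S, ‖α m‖ ^ 2 :=
    (Finset.add_sum_erase Finset.univ (fun m => ‖α m‖ ^ 2) (Finset.mem_univ m₀)).symm
  have hkey : (N:ℝ)⁻¹ ≤ ∑ m ∈ S, ‖α m‖ ^ 2 := by
    rw [inv_le_iff_one_le_mul₀ hNpos]
    nlinarith [hnorm, hCS, hsplit]
  calc (N:ℝ)⁻¹ * t ≤ t * ∑ m ∈ S, ‖α m‖ ^ 2 := by
        rw [mul_comm]
        exact mul_le_mul_of_nonneg_left hkey ht0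
    _ = ∑ m ∈ S, t * ‖α m‖ ^ 2 := by rw [Finset.mul_sum]
    _ ≤ ∑ m ∈ S, c m * ‖α m‖ ^ 2 := by
        apply Finset.sum_le_sum
        intro m hm
        exact mul_le_mul_of_nonneg_right (htle m hm) (by positivity)
    _ ≤ ∑ m, c m * ‖α m‖ ^ 2 := by
        apply Finset.sum_le_sum_of_subset_of_nonneg (Finset.erase_subset _ _)
        intro m _ _
        exact mul_nonneg (hc m) (by positivity)
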